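/- Let ε, δ ∈ (0, 1/2), A, N > 0 with N²/(δA) > e^{1.5}. If nonnegative reals x_1,…,x_N and reals a_1,…,a_N ≥ 1 satisfy ∑ a_n ≤ A and ∑ ε^{a_n x_n} < δ, then ∑ x_n ≥ (N²/(A·ln(1/ε)))·ln(N/δ). -/

import Mathlib

open Set

lemma gque_hasDerivAt (K : ℝ) {t : ℝ} (ht : 0 < t) :
    HasDerivAt (fun u => (K + Real.log u) / u) ((1 - K - Real.log t) / t ^ 2) t := by
  have h1 : HasDerivAt (fun u => K + Real.log u) t⁻¹ t :=
    (Real.hasDerivAt_log ht.ne').const_add K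
  have h2 := h1.div (hasDerivAt_id t) ht.ne'
  refine h2.congr_deriv ?_
  simp only [id]
  field_simp
  ring

lemma gque'_hasDerivAt (K : ℝ) {t : ℝ} (ht : 0 < t) :
    HasDerivAt (fun u => (1 - K - Real.log u) / u ^ 2)
      ((2 * K + 2 * Real.log t - 3) / t ^ 3) t := by
  have h1 : HasDerivAt (fun u => 1 - K - Real.log u) (-t⁻¹) t :=
    (Real.hasDerivAt_log ht.ne').const_sub (1 - K)
  have h2 : HasDerivAt (fun u : ℝ => u ^ 2) (2 * t) t := by
    simpa using (hasDerivAt_pow 2 t)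
  have h3 := h1.div h2 (by positivity)
  refine h3.congr_deriv ?_
  field_simp
  ring

lemma gque_convexOn (K : ℝ) (hK : (3:ℝ)/2 ≤ K) :
    ConvexOn ℝ (Ici (1:ℝ)) (fun u => (K + Real.log u) / u) := by
  have hint : interior (Ici (1:ℝ)) = Ioi 1 := interior_Ici
  have hpos : ∀ u ∈ Ici (1:ℝ), (0:ℝ) < u := fun u hu => lt_of_lt_of_le one_pos hu
  refine MonotoneOn.convexOn_of_deriv (convex_Ici 1) ?_ ?_ ?_
  · intro u hu
    exact ((gque_hasDerivAt K (hpos u hu)).continuousAt).continuousWithinAt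
  · intro u hu
    rw [hint] at hu
    exact ((gque_hasDerivAt K (lt_trans one_pos hu)).differentiableAt).differentiableWithinAt
  · rw [hint]
    have heq : ∀ u ∈ Ioi (1:ℝ), deriv (fun u => (K + Real.log u) / u) u
        = (1 - K - Real.log u) / u ^ 2 := fun u hu =>
      (gque_hasDerivAt K (lt_trans one_pos hu)).deriv
    have hmono : MonotoneOn (fun u => (1 - K - Real.log u) / u ^ 2) (Ici (1:ℝ)) := by
      refine monotoneOn_of_deriv_nonneg (convex_Ici 1) ?_ ?_ ?_
      · intro u hu
        exact ((gque'_hasDerivAt K (hpos u hu)).continuousAt).continuousWithinAt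
      · rw [hint]
        intro u hu
        exact ((gque'_hasDerivAt K (lt_trans one_pos hu)).differentiableAt).differentiableWithinAt
      · rw [hint]
        intro u hu
        rw [(gque'_hasDerivAt K (lt_trans one_pos (hu : (1:ℝ) < u))).deriv]
        have hlog : 0 ≤ Real.log u := Real.log_nonneg (le_of_lt hu)
        have : (0:ℝ) < u ^ 3 := pow_pos (lt_trans one_pos hu) 3
        apply div_nonneg _ this.le
        linarith
    intro u hu v hv huv
    rw [heq u hu, heq v hv]
    exact hmono (Set.mem_Ici.mpr (le_of_lt hu)) (Set.mem_Ici.mpr (le_of_lt hv)) huv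

lemma gque_antitoneOn (K : ℝ) (hK : (3:ℝ)/2 ≤ K) :
    AntitoneOn (fun u => (K + Real.log u) / u) (Ici (1:ℝ)) := by
  have hint : interior (Ici (1:ℝ)) = Ioi 1 := interior_Ici
  have hpos : ∀ u ∈ Ici (1:ℝ), (0:ℝ) < u := fun u hu => lt_of_lt_of_le one_pos hu
  refine antitoneOn_of_deriv_nonpos (convex_Ici 1) ?_ ?_ ?_
  · intro u hu
    exact ((gque_hasDerivAt K (hpos u hu)).continuousAt).continuousWithinAt
  · rw [hint]
    intro u hu
    exact ((gque_hasDerivAt K (lt_trans one_pos hu)).differentiableAt).differentiableWithinAt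
  · rw [hint]
    intro u hu
    rw [(gque_hasDerivAt K (lt_trans one_pos (hu : (1:ℝ) < u))).deriv]
    have hlog : 0 ≤ Real.log u := Real.log_nonneg (le_of_lt hu)
    have h2 : (0:ℝ) < u ^ 2 := pow_pos (lt_trans one_pos hu) 2
    apply div_nonpos_of_nonpos_of_nonneg _ h2.le
    linarith

theorem core_optimization_lower_bound (N : ℕ) (hN : 0 < N) (ε δ A : ℝ)
    (hε0 : 0 < ε) (hε1 : ε < 1 / 2) (hδ0 : 0 < δ) (hδ1 : δ < 1 / 2) (hA : 0 < A)
    (hBig : (N : ℝ) ^ 2 / (δ * A) > Real.exp 1.5)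
    (x a : Fin N → ℝ) (hx : ∀ n, 0 ≤ x n) (ha : ∀ n, 1 ≤ a n)
    (hsuma : ∑ n, a n ≤ A)
    (hconstraint : ∑ n, ε ^ (a n * x n) < δ) :
    ∑ n, x n ≥ ((N : ℝ) ^ 2 / (A * Real.log (1 / ε))) * Real.log (N / δ) := by
  classical
  have hNR : (0:ℝ) < (N:ℝ) := Nat.cast_pos.mpr hN
  have ha0 : ∀ n, (0:ℝ) < a n := fun n => lt_of_lt_of_le one_pos (ha n)
  set L : ℝ := Real.log (1/ε) with hLdef
  have hL : 0 < L := Real.log_pos (by rw [lt_div_iff₀ hε0]; linarith)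
  have hLε : Real.log ε = -L := by rw [hLdef, one_div, Real.log_inv, neg_neg]
  set S : ℝ := ∑ n, (a n)⁻¹ with hSdef
  have hSpos : 0 < S :=
    Finset.sum_pos (fun n _ => inv_pos.mpr (ha0 n)) ⟨⟨0, hN⟩, Finset.mem_univ _⟩
  -- Cauchy-Schwarz : N^2 ≤ (∑ a) * S
  have hCS : (N:ℝ)^2 ≤ (∑ n, a n) * S := by
    have h := Finset.sum_mul_sq_le_sq_mul_sq Finset.univ
      (fun n => Real.sqrt (a n)) (fun n => (Real.sqrt (a n))⁻¹)
    have e1 : ∀ n : Fin N, Real.sqrt (a n) * (Real.sqrt (a n))⁻¹ = 1 := fun n =>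
      mul_inv_cancel₀ (Real.sqrt_ne_zero'.mpr (ha0 n))
    have e2 : ∀ n : Fin N, Real.sqrt (a n) ^ 2 = a n := fun n => Real.sq_sqrt (ha0 n).le
    have e3 : ∀ n : Fin N, ((Real.sqrt (a n))⁻¹) ^ 2 = (a n)⁻¹ := fun n => by
      rw [inv_pow, Real.sq_sqrt (ha0 n).le]
    simp only [e1, e2, e3, Finset.sum_const, Finset.card_univ, Fintype.card_fin,
      nsmul_eq_mul, mul_one] at h
    exact_mod_cast h
  have hS_ge : (N:ℝ)^2 / A ≤ S := by
    rw [div_le_iff₀ hA]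
    calc (N:ℝ)^2 ≤ (∑ n, a n) * S := hCS
      _ ≤ A * S := mul_le_mul_of_nonneg_right hsuma hSpos.le
      _ = S * A := mul_comm _ _
  set K : ℝ := Real.log ((N:ℝ)^2 / A) - Real.log δ with hKdef
  have hNA : (0:ℝ) < (N:ℝ)^2 / A := by positivity
  have hK_eq : K = Real.log ((N:ℝ)^2 / (δ * A)) := by
    rw [hKdef, ← Real.log_div hNA.ne' hδ0.ne']
    congr 1
    field_simp
  have hK : (3:ℝ)/2 ≤ K := by
    have h15 := Real.log_lt_log (Real.exp_pos 1.5) hBig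
    rw [Real.log_exp] at h15
    rw [hK_eq]
    norm_num at h15 ⊢
    linarith
  -- per-index tangent-line inequality
  have key : ∀ n : Fin N,
      (a n)⁻¹ * (K + Real.log (a n)) + ((a n)⁻¹ - ε ^ (a n * x n) * S / δ) ≤ x n * L := by
    intro n
    set c : ℝ := (a n)⁻¹ with hc
    have hcpos : 0 < c := inv_pos.mpr (ha0 n)
    have hca : c * a n = 1 := inv_mul_cancel₀ (ha0 n).ne'
    set t : ℝ := ε ^ (a n * x n) with htdef
    have htpos : 0 < t := Real.rpow_pos_of_pos hε0 _
    have hspos : 0 < δ * c / S := by positivity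
    have htan : Real.log t - Real.log (δ * c / S) ≤ t / (δ * c / S) - 1 := by
      have h := Real.log_le_sub_one_of_pos (show 0 < t / (δ * c / S) by positivity)
      rwa [Real.log_div htpos.ne' hspos.ne'] at h
    have hlogt : Real.log t = -(a n * x n) * L := by
      rw [htdef, Real.log_rpow hε0, hLε]; ring
    have hlogs : Real.log (δ * c / S) = Real.log δ - Real.log (a n) - Real.log S := by
      rw [Real.log_div (by positivity : (0:ℝ) < δ * c).ne' hSpos.ne',
        Real.log_mul hδ0.ne' hcpos.ne', hc, Real.log_inv]
      ring
    have hcc : c * (t / (δ * c / S)) = t * S / δ := by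
      field_simp
    have hmul := mul_le_mul_of_nonneg_left htan hcpos.le
    rw [hlogs] at hmul
    have hxL : c * (-(Real.log t)) = x n * L := by
      rw [hlogt]
      linear_combination (x n * L) * hca
    have hKle : K ≤ Real.log S - Real.log δ := by
      have := Real.log_le_log hNA hS_ge
      rw [hKdef]; linarith
    have hKmul : c * (K + Real.log (a n)) ≤ c * (Real.log S - Real.log δ + Real.log (a n)) := by
      apply mul_le_mul_of_nonneg_left _ hcpos.le
      linarith
    have d1 : c * (Real.log t - (Real.log δ - Real.log (a n) - Real.log S))
        = c * Real.log t - c * Real.log δ + c * Real.log (a n) + c * Real.log S := by ring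
    have d2 : c * (t / (δ * c / S) - 1) = c * (t / (δ * c / S)) - c := by ring
    have d3 : c * (Real.log S - Real.log δ + Real.log (a n))
        = c * Real.log S - c * Real.log δ + c * Real.log (a n) := by ring
    have d4 : c * -Real.log t = -(c * Real.log t) := by ring
    rw [d1, d2, hcc] at hmul
    rw [d3] at hKmul
    rw [d4] at hxL
    clear_value L S K c t
    linarith [hmul, hxL, hKmul]
  -- sum it up
  have hsumkey : ∑ n, (a n)⁻¹ * (K + Real.log (a n)) ≤ (∑ n, x n) * L := by
    have h := Finset.sum_le_sum (fun n (_ : n ∈ Finset.univ) => key n)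
    rw [Finset.sum_add_distrib, Finset.sum_sub_distrib] at h
    have e2 : ∑ n, ε ^ (a n * x n) * S / δ = (∑ n, ε ^ (a n * x n)) * S / δ := by
      rw [← Finset.sum_div, ← Finset.sum_mul]
    have e3 : ∑ n, x n * L = (∑ n, x n) * L := by rw [← Finset.sum_mul]
    rw [e2, e3, ← hSdef] at h
    have hbound : (∑ n, ε ^ (a n * x n)) * S / δ ≤ S := by
      rw [div_le_iff₀ hδ0]
      have h1 : (∑ n, ε ^ (a n * x n)) * S ≤ δ * S :=
        mul_le_mul_of_nonneg_right hconstraint.le hSpos.le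
      linarith
    linarith
  -- rewrite as function g
  have hgsum : ∑ n, (K + Real.log (a n)) / (a n) ≤ (∑ n, x n) * L := by
    calc ∑ n, (K + Real.log (a n)) / (a n)
        = ∑ n, (a n)⁻¹ * (K + Real.log (a n)) := by
          apply Finset.sum_congr rfl
          intro n _
          rw [div_eq_mul_inv, mul_comm]
      _ ≤ (∑ n, x n) * L := hsumkey
  -- Jensen
  have hconv := gque_convexOn K hK
  have hw1 : ∑ _i : Fin N, (N:ℝ)⁻¹ = 1 := by
    rw [Finset.sum_const, Finset.card_univ, Fintype.card_fin, nsmul_eq_mul,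
      mul_inv_cancel₀ hNR.ne']
  have hJ := hconv.map_sum_le (fun i _ => inv_nonneg.mpr hNR.le) hw1
    (fun i _ => (ha i : a i ∈ Set.Ici (1:ℝ)))
  simp only [smul_eq_mul] at hJ
  rw [← Finset.mul_sum, ← Finset.mul_sum] at hJ
  set m : ℝ := (N:ℝ)⁻¹ * ∑ n, a n with hmdef
  have hNle : (N:ℝ) ≤ ∑ n, a n := by
    calc (N:ℝ) = ∑ _n : Fin N, (1:ℝ) := by
          rw [Finset.sum_const, Finset.card_univ, Fintype.card_fin, nsmul_eq_mul, mul_one]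
      _ ≤ ∑ n, a n := Finset.sum_le_sum (fun n _ => ha n)
  have hm1 : (1:ℝ) ≤ m := by
    have h := mul_le_mul_of_nonneg_left hNle (inv_nonneg.mpr hNR.le)
    rwa [inv_mul_cancel₀ hNR.ne'] at h
  have hmA : m ≤ A / (N:ℝ) := by
    have h := mul_le_mul_of_nonneg_left hsuma (inv_nonneg.mpr hNR.le)
    rw [hmdef]
    calc (N:ℝ)⁻¹ * ∑ n, a n ≤ (N:ℝ)⁻¹ * A := h
      _ = A / (N:ℝ) := by rw [inv_mul_eq_div]
  have hanti := gque_antitoneOn K hK (Set.mem_Ici.mpr hm1)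
    (Set.mem_Ici.mpr (le_trans hm1 hmA)) hmA
  -- combine : N * g(A/N) ≤ ∑ g(a n)
  have hNg : (N:ℝ) * ((K + Real.log (A / (N:ℝ))) / (A / (N:ℝ)))
      ≤ ∑ n, (K + Real.log (a n)) / (a n) := by
    have h1 : (N:ℝ) * ((K + Real.log (A / (N:ℝ))) / (A / (N:ℝ)))
        ≤ (N:ℝ) * ((K + Real.log m) / m) :=
      mul_le_mul_of_nonneg_left hanti hNR.le
    have h2 : (N:ℝ) * ((K + Real.log m) / m)
        ≤ (N:ℝ) * ((N:ℝ)⁻¹ * ∑ n, (K + Real.log (a n)) / (a n)) :=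
      mul_le_mul_of_nonneg_left hJ hNR.le
    have h3 : (N:ℝ) * ((N:ℝ)⁻¹ * ∑ n, (K + Real.log (a n)) / (a n))
        = ∑ n, (K + Real.log (a n)) / (a n) := by
      rw [← mul_assoc, mul_inv_cancel₀ hNR.ne', one_mul]
    linarith
  have e4 : (N:ℝ) * ((K + Real.log (A / (N:ℝ))) / (A / (N:ℝ)))
      = (N:ℝ)^2 / A * (K + Real.log (A / (N:ℝ))) := by
    field_simp
  have e5 : K + Real.log (A / (N:ℝ)) = Real.log ((N:ℝ) / δ) := by
    rw [hKdef, Real.log_div hA.ne' hNR.ne', Real.log_div (by positivity : ((N:ℝ)^2) ≠ 0) hA.ne',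
      Real.log_div hNR.ne' hδ0.ne', Real.log_pow]
    push_cast
    ring
  have main : (N:ℝ)^2 / A * Real.log ((N:ℝ) / δ) ≤ (∑ n, x n) * L := by
    rw [← e5, ← e4]
    linarith
  rw [ge_iff_le]
  have e6 : (N:ℝ)^2 / (A * L) * Real.log ((N:ℝ) / δ)
      = ((N:ℝ)^2 / A * Real.log ((N:ℝ) / δ)) / L := by
    field_simp
  rw [e6, div_le_iff₀ hL]
  exact main
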